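/- Let G be an HNN extension of a group H with stable letter t and associated subgroups A, B ≤ H satisfying t⁻¹At = B. Let S_H be a symmetric generating set of H containing A ∪ B, and set S_G = S_H ∪ {t, t⁻¹}. Then H is isometrically embedded in G: for all h₁, h₂ ∈ H, d_{S_H}(h₁,h₂) = d_{S_G}(h₁,h₂). -/

import Mathlib

/-- The word metric on `G` with respect to a generating set `S`. -/
noncomputable def wordDist {G : Type*} [Group G] (S : Set G) (g h : G) : ℕ :=
  sInf {k : ℕ | ∃ l : List G, l.length = k ∧ (∀ x ∈ l, x ∈ S) ∧ l.prod = g⁻¹ * h}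

open HNNExtension

section Aux

variable {H : Type*} [Group H] {S : Set H}

lemma wordDist_shift (S : Set H) (g h : H) : wordDist S g h = wordDist S 1 (g⁻¹ * h) := by
  simp [wordDist]

lemma wordDist_le_of_list {g : H} {l : List H} (hl : ∀ x ∈ l, x ∈ S) (hp : l.prod = g)
    {n : ℕ} (hn : l.length ≤ n) : wordDist S 1 g ≤ n :=
  le_trans (Nat.sInf_le ⟨l, rfl, hl, by simp [hp]⟩) hn

lemma wordDist_one : wordDist S 1 (1 : H) = 0 :=
  Nat.le_zero.mp (wordDist_le_of_list (l := []) (by simp) (by simp) (by simp))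

lemma exists_min_list (hsymm : ∀ s ∈ S, s⁻¹ ∈ S) (hgen : Subgroup.closure S = ⊤) (g : H) :
    ∃ l : List H, (∀ x ∈ l, x ∈ S) ∧ l.prod = g ∧ l.length = wordDist S 1 g := by
  have hg : g ∈ (Subgroup.closure S).toSubmonoid := by
    rw [hgen]; trivial
  rw [Subgroup.closure_toSubmonoid] at hg
  obtain ⟨l, hl, hp⟩ := Submonoid.exists_list_of_mem_closure hg
  have hl' : ∀ x ∈ l, x ∈ S := by
    intro x hx
    rcases hl x hx with h | h
    · exact h
    · simpa using hsymm _ h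
  have hne : {k : ℕ | ∃ l : List H, l.length = k ∧ (∀ x ∈ l, x ∈ S) ∧
      l.prod = (1:H)⁻¹ * g}.Nonempty := ⟨l.length, l, rfl, hl', by simp [hp]⟩
  obtain ⟨l', hlen, hmem, hprod⟩ := Nat.sInf_mem hne
  exact ⟨l', hmem, by simpa using hprod, hlen⟩

lemma wordDist_mul_le (hsymm : ∀ s ∈ S, s⁻¹ ∈ S) (hgen : Subgroup.closure S = ⊤) (g h : H) :
    wordDist S 1 (g * h) ≤ wordDist S 1 g + wordDist S 1 h := by
  obtain ⟨l₁, h₁, p₁, n₁⟩ := exists_min_list hsymm hgen g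
  obtain ⟨l₂, h₂, p₂, n₂⟩ := exists_min_list hsymm hgen h
  refine wordDist_le_of_list (l := l₁ ++ l₂) ?_ ?_ ?_
  · intro x hx; rcases List.mem_append.mp hx with h | h
    · exact h₁ x h
    · exact h₂ x h
  · simp [p₁, p₂]
  · simp [n₁, n₂]

lemma wordDist_le_one {s : H} (hs : s ∈ S) : wordDist S 1 s ≤ 1 :=
  wordDist_le_of_list (l := [s]) (by simpa) (by simp) (by simp)

end Aux

section HNN

variable {H : Type*} [Group H] (A B : Subgroup H) (φ : A ≃* B)

noncomputable def pairsProd (ps : List (ℤˣ × H)) : HNNExtension H B A φ.symm :=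
  (ps.map (fun x => t ^ (x.1 : ℤ) * of x.2)).prod

noncomputable def evalW (head : H) (ps : List (ℤˣ × H)) : HNNExtension H B A φ.symm :=
  of head * pairsProd A B φ ps

noncomputable def weightW (S : Set H) (head : H) (ps : List (ℤˣ × H)) : ℕ :=
  wordDist S 1 head + (ps.map (fun p => 1 + wordDist S 1 p.2)).sum

lemma pairsProd_nil : pairsProd A B φ [] = 1 := rfl

lemma pairsProd_cons (p : ℤˣ × H) (ps : List (ℤˣ × H)) :
    pairsProd A B φ (p :: ps) = (t ^ (p.1 : ℤ) * of p.2) * pairsProd A B φ ps := by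
  simp [pairsProd]

lemma pairsProd_append (l₁ l₂ : List (ℤˣ × H)) :
    pairsProd A B φ (l₁ ++ l₂) = pairsProd A B φ l₁ * pairsProd A B φ l₂ := by
  simp [pairsProd]

lemma pinch (u : ℤˣ) (g : H) (hg : g ∈ toSubgroup B A u) :
    ∃ g', g' ∈ toSubgroup B A (-u) ∧
      (t ^ (u : ℤ) * of g * t ^ ((-u : ℤˣ) : ℤ) : HNNExtension H B A φ.symm) = of g' := by
  rcases Int.units_eq_one_or u with rfl | rfl
  · refine ⟨φ.symm ⟨g, hg⟩, (φ.symm ⟨g, hg⟩).2, ?_⟩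
    have := equiv_eq_conj (φ := φ.symm) (⟨g, hg⟩ : B)
    simpa using this.symm
  · refine ⟨φ ⟨g, hg⟩, (φ ⟨g, hg⟩).2, ?_⟩
    have := equiv_symm_eq_conj (φ := φ.symm) (⟨g, hg⟩ : A)
    simp only [MulEquiv.symm_symm] at this
    simpa using this.symm

lemma toSubgroup_subset {S : Set H} (hA : (A : Set H) ⊆ S) (hB : (B : Set H) ⊆ S)
    (v : ℤˣ) : (toSubgroup B A v : Set H) ⊆ S := by
  rcases Int.units_eq_one_or v with rfl | rfl
  · exact hB
  · exact hA

/-- Conversion: any word in the generators gives a syllable form of no greater weight. -/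
lemma convert (S : Set H) (hsymm : ∀ s ∈ S, s⁻¹ ∈ S) (hgen : Subgroup.closure S = ⊤) :
    ∀ l : List (HNNExtension H B A φ.symm), (∀ x ∈ l, x ∈ of '' S ∪ {t, t⁻¹}) →
      ∃ head ps, evalW A B φ head ps = l.prod ∧ weightW S head ps ≤ l.length := by
  intro l
  induction l with
  | nil =>
      intro _
      exact ⟨1, [], by simp [evalW, pairsProd_nil], by simp [weightW, wordDist_one]⟩
  | cons x l ih =>
      intro hmem
      obtain ⟨head, ps, hev, hW⟩ := ih (fun y hy => hmem y (List.mem_cons_of_mem _ hy))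
      rcases hmem x List.mem_cons_self with hx | hx
      · obtain ⟨s, hs, rfl⟩ := hx
        refine ⟨s * head, ps, ?_, ?_⟩
        · rw [evalW, map_mul, mul_assoc]
          rw [evalW] at hev
          rw [hev, List.prod_cons]
        · have h1 : wordDist S 1 (s * head) ≤ 1 + wordDist S 1 head :=
            le_trans (wordDist_mul_le hsymm hgen s head)
              (by have := wordDist_le_one (S := S) hs; omega)
          simp only [weightW, List.length_cons] at *
          omega
      · rcases hx with hx | hx
        · subst hx
          refine ⟨1, (1, head) :: ps, ?_, ?_⟩
          · rw [evalW, pairsProd_cons, map_one, one_mul, List.prod_cons, ← hev, evalW]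
            simp [mul_assoc]
          · simp only [weightW, List.map_cons, List.sum_cons, List.length_cons,
              wordDist_one] at *
            omega
        · simp only [Set.mem_singleton_iff] at hx
          subst hx
          refine ⟨1, (-1, head) :: ps, ?_, ?_⟩
          · rw [evalW, pairsProd_cons, map_one, one_mul, List.prod_cons, ← hev, evalW]
            simp [mul_assoc]
          · simp only [weightW, List.map_cons, List.sum_cons, List.length_cons,
              wordDist_one] at *
            omega

lemma chain_of_no_pinch : ∀ ps : List (ℤˣ × H),
    (¬ ∃ (ps₁ : List (ℤˣ × H)) (u : ℤˣ) (g g' : H) (ps₂ : List (ℤˣ × H)),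
      ps = ps₁ ++ (u, g) :: (-u, g') :: ps₂ ∧ g ∈ toSubgroup B A u) →
    ps.Chain' (fun a b => a.2 ∈ toSubgroup B A a.1 → a.1 = b.1) := by
  intro ps
  induction ps with
  | nil => intro _; exact List.isChain_nil
  | cons p ps ih =>
      intro hno
      cases ps with
      | nil => exact List.isChain_singleton _
      | cons q rest =>
          refine List.isChain_cons_cons.mpr ?_
          constructor
          · intro hm
            by_contra hne
            have hq : q.1 = -p.1 := by
              rcases Int.units_eq_one_or p.1 with h1 | h1 <;>
                rcases Int.units_eq_one_or q.1 with h2 | h2 <;>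
                  simp_all
            refine hno ⟨[], p.1, p.2, q.2, rest, ?_, hm⟩
            simp [← hq]
          · refine ih ?_
            rintro ⟨ps₁, u, g, g', ps₂, hEq, hg⟩
            exact hno ⟨p :: ps₁, u, g, g', ps₂, by rw [hEq]; rfl, hg⟩

lemma descent (S : Set H) (hsymm : ∀ s ∈ S, s⁻¹ ∈ S) (hgen : Subgroup.closure S = ⊤)
    (hA : (A : Set H) ⊆ S) (hB : (B : Set H) ⊆ S) :
    ∀ n : ℕ, ∀ head : H, ∀ ps : List (ℤˣ × H), weightW S head ps ≤ n →
      ∀ h : H, evalW A B φ head ps = of h → wordDist S 1 h ≤ weightW S head ps := by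
  intro n
  induction n with
  | zero =>
      intro head ps hW h hev
      have hps : ps = [] := by
        cases ps with
        | nil => rfl
        | cons p ps => simp [weightW] at hW
      subst hps
      rw [evalW, pairsProd_nil, mul_one] at hev
      have : head = h := HNNExtension.of_injective φ.symm hev
      subst this
      simp [weightW]
  | succ n ih =>
      intro head ps hW h hev
      by_cases hbad : ∃ (ps₁ : List (ℤˣ × H)) (u : ℤˣ) (g g' : H) (ps₂ : List (ℤˣ × H)),
          ps = ps₁ ++ (u, g) :: (-u, g') :: ps₂ ∧ g ∈ toSubgroup B A u
      · obtain ⟨ps₁, u, g, g', ps₂, rfl, hg⟩ := hbad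
        obtain ⟨c, hcmem, hcEq⟩ := pinch A B φ u g hg
        have hcS : c ∈ S := toSubgroup_subset A B hA hB (-u) hcmem
        have hkey : (t ^ (u : ℤ) * of g) * (t ^ ((-u : ℤˣ) : ℤ) * of g')
            = (of (c * g') : HNNExtension H B A φ.symm) := by
          rw [map_mul, ← hcEq]; group
        have hmid : pairsProd A B φ ((u, g) :: (-u, g') :: ps₂)
            = of (c * g') * pairsProd A B φ ps₂ := by
          rw [pairsProd_cons, pairsProd_cons, ← mul_assoc, hkey]
        have hwcg : wordDist S 1 (c * g') ≤ 1 + wordDist S 1 g' :=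
          le_trans (wordDist_mul_le hsymm hgen c g')
            (by have := wordDist_le_one (S := S) hcS; omega)
        rcases List.eq_nil_or_concat ps₁ with rfl | ⟨L, ⟨v, x⟩, rfl⟩
        · -- merge into head
          simp only [List.nil_append] at hW hev ⊢
          have hev' : evalW A B φ (head * (c * g')) ps₂ = of h := by
            rw [← hev, evalW, evalW, hmid, map_mul, mul_assoc]
          have hWle : weightW S (head * (c * g')) ps₂ + 1 ≤
              weightW S head ((u, g) :: (-u, g') :: ps₂) := by
            have h2 := wordDist_mul_le hsymm hgen head (c * g')
            simp only [weightW, List.map_cons, List.sum_cons]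
            omega
          have hle := ih (head * (c * g')) ps₂ (by omega) h hev'
          omega
        · -- merge into last pair of ps₁
          simp only [List.concat_eq_append, List.append_assoc, List.cons_append,
            List.nil_append] at hW hev ⊢
          have hev' : evalW A B φ head (L ++ (v, x * (c * g')) :: ps₂) = of h := by
            rw [← hev, evalW, evalW, pairsProd_append, pairsProd_append,
              pairsProd_cons, pairsProd_cons, hmid, map_mul]
            group
          have hWle : weightW S head (L ++ (v, x * (c * g')) :: ps₂) + 1 ≤
              weightW S head (L ++ (v, x) :: (u, g) :: (-u, g') :: ps₂) := by
            have h1 := wordDist_mul_le hsymm hgen x (c * g')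
            simp only [weightW, List.map_append, List.sum_append, List.map_cons,
              List.sum_cons]
            omega
          have hle := ih head (L ++ (v, x * (c * g')) :: ps₂) (by omega) h hev'
          omega
      · have hchain := chain_of_no_pinch A B ps hbad
        let w : HNNExtension.NormalWord.ReducedWord H B A := ⟨head, ps, hchain⟩
        have hmem : w.prod φ.symm ∈ (of.range : Subgroup (HNNExtension H B A φ.symm)) :=
          ⟨h, hev.symm⟩
        have hnil : ps = [] := HNNExtension.ReducedWord.toList_eq_nil_of_mem_of_range φ.symm w hmem
        subst hnil
        rw [evalW, pairsProd_nil, mul_one] at hev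
        have : head = h := HNNExtension.of_injective φ.symm hev
        subst this
        simp [weightW]

end HNN

/-- Let `G = HNNExtension H B A φ.symm` be the HNN extension of `H` with stable letter `t`
and associated subgroups `A, B ≤ H` (with this orientation `t⁻¹ * of a * t = of (φ a)` for
`a ∈ A`, i.e. `t⁻¹At = B`).  If `S_H` is a symmetric generating set of `H` containing
`A ∪ B`, and `S_G = of '' S_H ∪ {t, t⁻¹}`, then `H` is isometrically embedded in `G`. -/
theorem stmt_7 {H : Type*} [Group H] (A B : Subgroup H) (φ : A ≃* B)
    (SH : Set H) (hSHsymm : ∀ s ∈ SH, s⁻¹ ∈ SH) (hSHgen : Subgroup.closure SH = ⊤)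
    (hA : (A : Set H) ⊆ SH) (hB : (B : Set H) ⊆ SH)
    (h₁ h₂ : H) :
    wordDist SH h₁ h₂ =
      wordDist ((of '' SH) ∪ {t, t⁻¹} : Set (HNNExtension H B A φ.symm))
        (of h₁) (of h₂) := by

  obtain ⟨l₀, hl₀, hp₀, hn₀⟩ := exists_min_list hSHsymm hSHgen (h₁⁻¹ * h₂)
  rw [wordDist_shift SH h₁ h₂, wordDist_shift _ (of h₁) (of h₂)]
  apply le_antisymm
  · -- hard direction
    set X : HNNExtension H B A φ.symm := (of h₁)⁻¹ * of h₂ with hX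
    have hXof : X = of (h₁⁻¹ * h₂) := by rw [hX, map_mul, map_inv]
    have hne : {k : ℕ | ∃ l : List (HNNExtension H B A φ.symm), l.length = k ∧
        (∀ x ∈ l, x ∈ (of '' SH) ∪ {t, t⁻¹}) ∧ l.prod = (1 : HNNExtension H B A φ.symm)⁻¹ * X}.Nonempty := by
      refine ⟨l₀.length, l₀.map of, by simp, ?_, ?_⟩
      · intro x hx
        obtain ⟨s, hs, rfl⟩ := List.mem_map.mp hx
        exact Or.inl ⟨s, hl₀ s hs, rfl⟩
      · rw [← map_list_prod, hp₀, ← hXof]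
        simp
    obtain ⟨l, hlen, hmem, hprod⟩ := Nat.sInf_mem hne
    obtain ⟨head, ps, hev, hW⟩ := convert A B φ SH hSHsymm hSHgen l hmem
    have hev' : evalW A B φ head ps = of (h₁⁻¹ * h₂) := by
      rw [hev, hprod, inv_one, one_mul, hXof]
    have := descent A B φ SH hSHsymm hSHgen hA hB (weightW SH head ps) head ps le_rfl
      (h₁⁻¹ * h₂) hev'
    calc wordDist SH 1 (h₁⁻¹ * h₂) ≤ weightW SH head ps := this
      _ ≤ l.length := hW
      _ = wordDist _ 1 X := hlen
  · -- easy direction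
    refine wordDist_le_of_list (l := l₀.map of) ?_ ?_ ?_
    · intro x hx
      obtain ⟨s, hs, rfl⟩ := List.mem_map.mp hx
      exact Or.inl ⟨s, hl₀ s hs, rfl⟩
    · rw [← map_list_prod, hp₀, map_mul, map_inv]
    · simp [hn₀]
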